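/- For distinct integers m, n ≥ 2, the free groups F_m and F_n are not ≡ᵇᶠ_3-equivalent. -/

import Mathlib

/-- Tuples `g` and `h` satisfy the same group-word equations (equal quantifier-free types). -/
def WordEq {ι : Type*} (G H : Type*) [Group G] [Group H]
    (g : ι → G) (h : ι → H) : Prop :=
  ∀ w : FreeGroup ι, FreeGroup.lift g w = 1 ↔ FreeGroup.lift h w = 1

/-- The standard symmetric back-and-forth relation of rank `α` between groups with
distinguished tuples. -/
def GBF (G H : Type*) [Group G] [Group H]
    (α : Ordinal) (n : ℕ) (g : Fin n → G) (h : Fin n → H) : Prop :=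
  (α = 0 ∧ WordEq G H g h) ∨
  (α ≠ 0 ∧
    (∀ β < α, ∀ (m : ℕ) (c : Fin m → G), ∃ d : Fin m → H,
      GBF G H β (n + m) (Fin.append g c) (Fin.append h d)) ∧
    (∀ β < α, ∀ (m : ℕ) (d : Fin m → H), ∃ c : Fin m → G,
      GBF G H β (n + m) (Fin.append g c) (Fin.append h d)))
termination_by α

/-- Tuples satisfying the same word equations and each generating their group give an
isomorphism. -/
lemma wordEq_mulEquiv {ι : Type*} {G H : Type*} [Group G] [Group H]
    {a : ι → G} {b : ι → H} (hw : WordEq G H a b)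
    (ha : Subgroup.closure (Set.range a) = ⊤)
    (hb : Subgroup.closure (Set.range b) = ⊤) : Nonempty (G ≃* H) := by
  have hsa : Function.Surjective (FreeGroup.lift a) := by
    rw [← MonoidHom.range_eq_top, FreeGroup.range_lift_eq_closure, ha]
  have hsb : Function.Surjective (FreeGroup.lift b) := by
    rw [← MonoidHom.range_eq_top, FreeGroup.range_lift_eq_closure, hb]
  have hker : (FreeGroup.lift a).ker = (FreeGroup.lift b).ker := by
    ext w
    simpa [MonoidHom.mem_ker] using hw w
  exact ⟨((QuotientGroup.quotientKerEquivOfSurjective _ hsa).symm.trans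
    (QuotientGroup.quotientMulEquivOfEq hker)).trans
    (QuotientGroup.quotientKerEquivOfSurjective _ hsb)⟩

/-- Isomorphic finitely generated free groups have the same rank. -/
lemma freeGroup_rank_eq {m n : ℕ} (e : FreeGroup (Fin m) ≃* FreeGroup (Fin n)) : m = n := by
  let K := Multiplicative (ZMod 2)
  let E : (FreeGroup (Fin m) →* K) ≃ (FreeGroup (Fin n) →* K) :=
  { toFun := fun f => f.comp e.symm.toMonoidHom
    invFun := fun f => f.comp e.toMonoidHom
    left_inv := fun f => by ext x; simp
    right_inv := fun f => by ext x; simp }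
  have E' : (Fin m → K) ≃ (Fin n → K) :=
    (FreeGroup.lift.trans E).trans FreeGroup.lift.symm
  have hcard : (2 : ℕ) ^ m = 2 ^ n := by
    have := Fintype.card_congr E'
    simpa [Fintype.card_fun, K] using this
  exact Nat.pow_right_injective (le_refl 2) hcard

/-- Distinct finitely generated free groups are not back-and-forth equivalent at rank 3. -/
theorem freeGroup_not_gbf_three {m n : ℕ} (hm : 2 ≤ m) (hn : 2 ≤ n) (hmn : m ≠ n) :
    ¬ GBF (FreeGroup (Fin m)) (FreeGroup (Fin n)) 3 0
      (fun i => i.elim0) (fun i => i.elim0) := by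
  intro h3
  set G := FreeGroup (Fin m)
  set H := FreeGroup (Fin n)
  -- step 1: add the generators of G
  rw [GBF] at h3
  rcases h3 with ⟨h30, _⟩ | ⟨_, hforth, _⟩
  · exact absurd h30 (by exact_mod_cast (by norm_num : (3:ℕ) ≠ 0))
  obtain ⟨d, h2⟩ := hforth 2 (by exact_mod_cast (by norm_num : (2:ℕ) < 3)) m FreeGroup.of
  -- step 2: add the generators of H
  rw [GBF] at h2
  rcases h2 with ⟨h20, _⟩ | ⟨_, _, hback⟩
  · exact absurd h20 (by exact_mod_cast (by norm_num : (2:ℕ) ≠ 0))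
  obtain ⟨c, h1⟩ := hback 1 (by exact_mod_cast (by norm_num : (1:ℕ) < 2)) n FreeGroup.of
  -- step 3: extract the word equivalence
  rw [GBF] at h1
  rcases h1 with ⟨h10, _⟩ | ⟨_, hforth1, _⟩
  · exact absurd h10 (by exact_mod_cast (by norm_num : (1:ℕ) ≠ 0))
  obtain ⟨d0, h0⟩ := hforth1 0 (by exact_mod_cast (by norm_num : (0:ℕ) < 1)) 0 (fun i => i.elim0)
  rw [GBF] at h0
  rcases h0 with ⟨_, hw⟩ | ⟨h00, _⟩
  · -- the combined tuples
    set a := Fin.append (Fin.append (Fin.append (fun i => (i : Fin 0).elim0) FreeGroup.of) c)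
        (fun i => (i : Fin 0).elim0) with ha_def
    set b := Fin.append (Fin.append (Fin.append (fun i => (i : Fin 0).elim0) d) FreeGroup.of)
        d0 with hb_def
    have ha : Subgroup.closure (Set.range a) = ⊤ := by
      rw [eq_top_iff, ← FreeGroup.closure_range_of (Fin m)]
      apply Subgroup.closure_mono
      rintro _ ⟨i, rfl⟩
      refine ⟨Fin.castAdd 0 (Fin.castAdd n (Fin.natAdd 0 i)), ?_⟩
      rw [ha_def, Fin.append_left, Fin.append_left, Fin.append_right]
    have hb : Subgroup.closure (Set.range b) = ⊤ := by
      rw [eq_top_iff, ← FreeGroup.closure_range_of (Fin n)]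
      apply Subgroup.closure_mono
      rintro _ ⟨i, rfl⟩
      refine ⟨Fin.castAdd 0 (Fin.natAdd (0 + m) i), ?_⟩
      rw [hb_def, Fin.append_left, Fin.append_right]
    obtain ⟨e⟩ := wordEq_mulEquiv hw ha hb
    exact hmn (freeGroup_rank_eq e)
  · exact h00 rfl
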